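/- Fix positive real parameters K1, K2, K3, Nx, Ny, Nz and define y*(L) by the explicit formula. Then Ny − y*(L) converges to min(Nx, Ny) as L → +∞. -/

import Mathlib

noncomputable def delta2 (K2 K3 Nx Ny L : ℝ) : ℝ :=
  4*K2*Ny*(K3*L + 1) + (K2*(Nx - Ny)*(K3*L + 1) + 1)^2

noncomputable def ystar (K2 K3 Nx Ny L : ℝ) : ℝ :=
  (-1 + K2*(Ny - Nx)*(K3*L + 1) + Real.sqrt (delta2 K2 K3 Nx Ny L)) / (2*K2*(K3*L + 1))

noncomputable def phiAux (Nx Ny u : ℝ) : ℝ :=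
  2*Nx*Ny / ((Nx+Ny) + u + Real.sqrt (((Nx-Ny)+u)^2 + 4*Ny*u))

lemma il7r_key (K2 K3 Nx Ny : ℝ) (hK2 : 0 < K2) (hK3 : 0 < K3)
    (hNx : 0 < Nx) (hNy : 0 < Ny) (L : ℝ) (hL : 0 ≤ L) :
    Ny - ystar K2 K3 Nx Ny L = phiAux Nx Ny (1/(K2*(K3*L+1))) := by
  have ht : (0:ℝ) < K3*L + 1 := by positivity
  set s : ℝ := K2*(K3*L+1) with hs_def
  have hs : 0 < s := by positivity
  clear_value s
  set u : ℝ := 1/s with hu_def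
  have hu : 0 < u := by positivity
  have hinner : ((Nx-Ny)+u)^2 + 4*Ny*u = delta2 K2 K3 Nx Ny L / s^2 := by
    rw [delta2, hu_def, hs_def]
    field_simp
    ring
  have hδ : 0 ≤ delta2 K2 K3 Nx Ny L := by
    rw [delta2]; positivity
  have hsqrt : Real.sqrt (delta2 K2 K3 Nx Ny L) =
      s * Real.sqrt (((Nx-Ny)+u)^2 + 4*Ny*u) := by
    rw [hinner, Real.sqrt_div hδ, Real.sqrt_sq hs.le]
    field_simp
  set R : ℝ := Real.sqrt (((Nx-Ny)+u)^2 + 4*Ny*u) with hR_def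
  have hR : 0 ≤ R := Real.sqrt_nonneg _
  have hR2 : R^2 = ((Nx-Ny)+u)^2 + 4*Ny*u := by
    rw [hR_def, Real.sq_sqrt]; nlinarith
  have hD : 0 < (Nx+Ny) + u + R := by positivity
  rw [ystar, phiAux, hsqrt]
  have h2 : 2*K2*(K3*L+1) = 2*s := by rw [hs_def]; ring
  have h3 : K2*(Ny-Nx)*(K3*L+1) = (Ny-Nx)*s := by rw [hs_def]; ring
  rw [h2, h3, ← hR_def]
  have hR2' : (s*R)^2 = ((Nx-Ny)*s+1)^2 + 4*Ny*s := by
    rw [mul_pow, hR2, hu_def]; field_simp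
  rw [eq_div_iff hD.ne', hu_def]
  field_simp
  linear_combination -hR2'

/-- `Ny − y*(L)` converges to `min Nx Ny` as `L → +∞`. -/
theorem il7r_ny_sub_ystar_tendsto
    (K1 K2 K3 Nx Ny Nz : ℝ)
    (hK1 : 0 < K1) (hK2 : 0 < K2) (hK3 : 0 < K3)
    (hNx : 0 < Nx) (hNy : 0 < Ny) (hNz : 0 < Nz) :
    Filter.Tendsto (fun L : ℝ => Ny - ystar K2 K3 Nx Ny L)
      Filter.atTop (nhds (min Nx Ny)) := by
  have h1 : Filter.Tendsto (fun L : ℝ => 1/(K2*(K3*L+1))) Filter.atTop (nhds 0) := by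
    simp only [one_div]
    apply Filter.Tendsto.inv_tendsto_atTop
    apply Filter.Tendsto.const_mul_atTop hK2
    apply Filter.tendsto_atTop_add_const_right
    exact Filter.Tendsto.const_mul_atTop hK3 Filter.tendsto_id
  have hden : (0:ℝ) < (Nx+Ny) + 0 + Real.sqrt (((Nx-Ny)+0)^2 + 4*Ny*0) := by
    have := Real.sqrt_nonneg (((Nx-Ny)+0)^2 + 4*Ny*0)
    linarith
  have hcont : ContinuousAt (phiAux Nx Ny) 0 := by
    unfold phiAux
    apply ContinuousAt.div
    · fun_prop
    · apply ContinuousAt.add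
      · fun_prop
      · exact (Real.continuous_sqrt.comp (by fun_prop)).continuousAt
    · exact hden.ne'
  have h0 : phiAux Nx Ny 0 = min Nx Ny := by
    rw [phiAux]
    rw [show ((Nx-Ny)+0)^2 + 4*Ny*0 = (Nx-Ny)^2 by ring, Real.sqrt_sq_eq_abs]
    rcases le_total Nx Ny with h | h
    · rw [abs_of_nonpos (by linarith), min_eq_left h]
      rw [div_eq_iff (by linarith : Nx + Ny + 0 + -(Nx-Ny) ≠ 0)]
      ring
    · rw [abs_of_nonneg (by linarith), min_eq_right h]
      rw [div_eq_iff (by linarith : Nx + Ny + 0 + (Nx-Ny) ≠ 0)]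
      ring
  have hmain : Filter.Tendsto (fun L : ℝ => phiAux Nx Ny (1/(K2*(K3*L+1))))
      Filter.atTop (nhds (min Nx Ny)) := by
    rw [← h0]
    exact hcont.tendsto.comp h1
  apply hmain.congr'
  filter_upwards [Filter.eventually_ge_atTop (0:ℝ)] with L hL
  exact (il7r_key K2 K3 Nx Ny hK2 hK3 hNx hNy L hL).symm
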